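/- Let θ₀ < θ₁, σ > 0, 0 < m̲₀ ≤ m̄₀ < 1, and let the payoffs satisfy u11 > u10 and u00 > u01 with u10 < u00 and u01 < u11. Define φ(t,z) = exp(((θ₁−θ₀)/σ²)·z − ((θ₁²−θ₀²)/(2σ²))·t) and, for m₀ ∈ (0,1), m_t(z; m₀) = (m₀/(1−m₀))·φ(t,z) / (1 + (m₀/(1−m₀))·φ(t,z)). Then there exist unique π̲, π̄ ∈ (0,1) and a unique function t ↦ z̃_t from [0,∞) to ℝ such that for every t ≥ 0: m_t(z̃_t; m̲₀) = π̲, m_t(z̃_t; m̄₀) = π̄, and π̲·u11 + (1−π̲)·u10 = π̄·u01 + (1−π̄)·u00. -/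

import Mathlib

lemma quadRoot (A B C : ℝ) (hA : 0 < A) (hC : C < 0) :
    ∃ x : ℝ, 0 < x ∧ A*x^2 + B*x + C = 0 ∧ ∀ y, 0 < y → A*y^2 + B*y + C = 0 → y = x := by
  have hD : 0 < B^2 - 4*A*C := by nlinarith [sq_nonneg B, mul_pos hA (neg_pos.2 hC)]
  have hs2 : Real.sqrt (B^2-4*A*C)^2 = B^2 - 4*A*C := Real.sq_sqrt hD.le
  have hsnn : 0 ≤ Real.sqrt (B^2-4*A*C) := Real.sqrt_nonneg _
  refine ⟨(-B + Real.sqrt (B^2-4*A*C))/(2*A), ?_, ?_, ?_⟩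
  · apply div_pos _ (by linarith); nlinarith [hs2, hsnn]
  · have hA' : (2*A) ≠ 0 := by positivity
    field_simp
    nlinarith [hs2, Real.sq_sqrt (show (0:ℝ) ≤ B^2 - A*4*C by linarith)]
  · intro y hy hrooty
    set x := (-B + Real.sqrt (B^2-4*A*C))/(2*A) with hx_def
    have hxpos : 0 < x := by
      rw [hx_def]; apply div_pos _ (by linarith); nlinarith [hs2, hsnn]
    have hroot : A*x^2 + B*x + C = 0 := by
      rw [hx_def]
      have hA' : (2*A) ≠ 0 := by positivity
      field_simp
      nlinarith [hs2, Real.sq_sqrt (show (0:ℝ) ≤ B^2 - A*4*C by linarith)]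
    have hfac : (y - x)*(A*x*y - C) = 0 := by
      linear_combination x*hrooty - y*hroot
    have hpos2 : 0 < A*x*y - C := by
      have := mul_pos (mul_pos hA hxpos) hy
      linarith
    rcases mul_eq_zero.1 hfac with h | h
    · linarith
    · linarith

lemma indiff_iff (c x u00 u01 u10 u11 : ℝ) (hc : 0 < c) (hx : 0 < x) :
    (x/(1+x)*u11 + (1-x/(1+x))*u10 = (c*x)/(1+c*x)*u01 + (1-(c*x)/(1+c*x))*u00) ↔
    c*(u11-u01)*x^2 + (u11-u00+c*(u10-u01))*x + (u10-u00) = 0 := by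
  have hcx : 0 < c*x := mul_pos hc hx
  have e1 : (1:ℝ)+x ≠ 0 := by linarith
  have e2 : (1:ℝ)+c*x ≠ 0 := by linarith
  constructor
  · intro h
    field_simp at h
    linear_combination h
  · intro h
    field_simp
    linear_combination h



/-- Likelihood ratio `φ(t,z) = exp(((θ₁−θ₀)/σ²)·z − ((θ₁²−θ₀²)/(2σ²))·t)`. -/
noncomputable def phi (θ₀ θ₁ σ t z : ℝ) : ℝ :=
  Real.exp (((θ₁ - θ₀) / σ ^ 2) * z - ((θ₁ ^ 2 - θ₀ ^ 2) / (2 * σ ^ 2)) * t)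

/-- Bayesian posterior probability of `θ₁` at time `t` given signal `z` and prior `m₀`. -/
noncomputable def post (θ₀ θ₁ σ m₀ t z : ℝ) : ℝ :=
  (m₀ / (1 - m₀)) * phi θ₀ θ₁ σ t z / (1 + (m₀ / (1 - m₀)) * phi θ₀ θ₁ σ t z)

theorem stmt_10 (θ₀ θ₁ σ mlo mhi u00 u01 u10 u11 : ℝ)
    (hθ : θ₀ < θ₁) (hσ : 0 < σ)
    (hm0 : 0 < mlo) (hm : mlo ≤ mhi) (hm1 : mhi < 1)
    (h1 : u10 < u11) (h0 : u01 < u00) (h2 : u10 < u00) (h3 : u01 < u11) :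
    ∃ πlo πhi : ℝ, ∃ ztilde : ℝ → ℝ,
      πlo ∈ Set.Ioo (0 : ℝ) 1 ∧ πhi ∈ Set.Ioo (0 : ℝ) 1 ∧
      (∀ t : ℝ, 0 ≤ t →
        post θ₀ θ₁ σ mlo t (ztilde t) = πlo ∧
        post θ₀ θ₁ σ mhi t (ztilde t) = πhi) ∧
      πlo * u11 + (1 - πlo) * u10 = πhi * u01 + (1 - πhi) * u00 ∧
      (∀ πlo' πhi' : ℝ, ∀ ztilde' : ℝ → ℝ,
        πlo' ∈ Set.Ioo (0 : ℝ) 1 → πhi' ∈ Set.Ioo (0 : ℝ) 1 →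
        (∀ t : ℝ, 0 ≤ t →
          post θ₀ θ₁ σ mlo t (ztilde' t) = πlo' ∧
          post θ₀ θ₁ σ mhi t (ztilde' t) = πhi') →
        πlo' * u11 + (1 - πlo') * u10 = πhi' * u01 + (1 - πhi') * u00 →
        πlo' = πlo ∧ πhi' = πhi ∧ ∀ t : ℝ, 0 ≤ t → ztilde' t = ztilde t) := by
  have hθd : (0:ℝ) < θ₁ - θ₀ := by linarith
  have hσ2 : (0:ℝ) < σ^2 := by positivity
  have hmlo1 : mlo < 1 := lt_of_le_of_lt hm hm1
  have hmhi0 : 0 < mhi := lt_of_lt_of_le hm0 hm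
  set rlo := mlo/(1-mlo) with hrlo_def
  set rhi := mhi/(1-mhi) with hrhi_def
  have hrlo : 0 < rlo := div_pos hm0 (by linarith)
  have hrhi : 0 < rhi := div_pos hmhi0 (by linarith)
  set c := rhi/rlo with hc_def
  have hc : 0 < c := div_pos hrhi hrlo
  have hrhic : rhi = c * rlo := by rw [hc_def]; field_simp
  obtain ⟨x, hxpos, hroot, huniq⟩ :=
    quadRoot (c*(u11-u01)) (u11-u00+c*(u10-u01)) (u10-u00)
      (mul_pos hc (by linarith)) (by linarith)
  -- posterior formulas
  have postlo : ∀ t z, post θ₀ θ₁ σ mlo t z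
      = rlo * phi θ₀ θ₁ σ t z / (1 + rlo * phi θ₀ θ₁ σ t z) := fun t z => rfl
  have posthi : ∀ t z, post θ₀ θ₁ σ mhi t z
      = rhi * phi θ₀ θ₁ σ t z / (1 + rhi * phi θ₀ θ₁ σ t z) := fun t z => rfl
  have oddseq : ∀ y1 y2 : ℝ, 0 < y1 → 0 < y2 → y1/(1+y1) = y2/(1+y2) → y1 = y2 := by
    intro y1 y2 hy1 hy2 h
    have e1 : (1:ℝ)+y1 ≠ 0 := by linarith
    have e2 : (1:ℝ)+y2 ≠ 0 := by linarith
    field_simp at h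
    linear_combination h
  set φhat := x / rlo with hφ_def
  have hφpos : 0 < φhat := div_pos hxpos hrlo
  have hrx : rlo * φhat = x := by rw [hφ_def]; field_simp
  have hrxc : rhi * φhat = c * x := by rw [hrhic, hφ_def]; field_simp
  set Z : ℝ → ℝ := fun t => (σ^2/(θ₁-θ₀)) * (Real.log φhat + ((θ₁^2-θ₀^2)/(2*σ^2))*t) with hZ_def
  have hphiZ : ∀ t, phi θ₀ θ₁ σ t (Z t) = φhat := by
    intro t
    rw [phi, hZ_def]
    have he : ((θ₁ - θ₀) / σ ^ 2) * ((σ^2/(θ₁-θ₀)) * (Real.log φhat + ((θ₁^2-θ₀^2)/(2*σ^2))*t))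
        - ((θ₁ ^ 2 - θ₀ ^ 2) / (2 * σ ^ 2)) * t = Real.log φhat := by
      field_simp
      ring
    rw [he, Real.exp_log hφpos]
  have h1x : (0:ℝ) < 1 + x := by linarith
  have hcx : (0:ℝ) < c*x := mul_pos hc hxpos
  have h1cx : (0:ℝ) < 1 + c*x := by linarith
  refine ⟨x/(1+x), (c*x)/(1+c*x), Z, ⟨div_pos hxpos h1x, (div_lt_one h1x).2 (by linarith)⟩,
    ⟨div_pos hcx h1cx, (div_lt_one h1cx).2 (by linarith)⟩, ?_, ?_, ?_⟩
  · intro t ht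
    constructor
    · rw [postlo, hphiZ, hrx]
    · rw [posthi, hphiZ, hrxc]
  · have := (indiff_iff c x u00 u01 u10 u11 hc hxpos).2 hroot
    linarith [this]
  · intro πlo' πhi' zt' hπlo' hπhi' hpost' hind'
    obtain ⟨hp0lo, hp0hi⟩ := hpost' 0 le_rfl
    have hφ'pos : 0 < phi θ₀ θ₁ σ 0 (zt' 0) := Real.exp_pos _
    set φ' := phi θ₀ θ₁ σ 0 (zt' 0) with hφ'_def
    have hypos : 0 < rlo * φ' := mul_pos hrlo hφ'pos
    set y := rlo * φ' with hy_def
    have hcy : (0:ℝ) < c*y := mul_pos hc hypos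
    have hπlo'eq : πlo' = y/(1+y) := by rw [← hp0lo, postlo]
    have hπhi'eq : πhi' = (c*y)/(1+c*y) := by
      rw [← hp0hi, posthi, hrhic]
      rw [hy_def, hφ'_def]
      ring_nf
    have hrooty : c*(u11-u01)*y^2 + (u11-u00+c*(u10-u01))*y + (u10-u00) = 0 := by
      apply (indiff_iff c y u00 u01 u10 u11 hc hypos).1
      rw [hπlo'eq, hπhi'eq] at hind'
      linarith [hind']
    have hyx : y = x := huniq y hypos hrooty
    refine ⟨by rw [hπlo'eq, hyx], by rw [hπhi'eq, hyx], ?_⟩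
    intro t ht
    obtain ⟨hplo, _⟩ := hpost' t ht
    have hπloval : πlo' = x/(1+x) := by rw [hπlo'eq, hyx]
    rw [postlo, hπloval] at hplo
    have hφtpos : 0 < phi θ₀ θ₁ σ t (zt' t) := Real.exp_pos _
    have hrφt : rlo * phi θ₀ θ₁ σ t (zt' t) = x :=
      oddseq _ _ (mul_pos hrlo hφtpos) hxpos hplo
    have hφteq : phi θ₀ θ₁ σ t (zt' t) = φhat := by
      rw [hφ_def]
      rw [eq_div_iff (ne_of_gt hrlo)]
      linarith [hrφt]
    have hexp : phi θ₀ θ₁ σ t (zt' t) = phi θ₀ θ₁ σ t (Z t) := by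
      rw [hφteq, hphiZ]
    rw [phi, phi] at hexp
    have hlin := Real.exp_injective hexp
    have hcoef : (θ₁-θ₀)/σ^2 ≠ 0 := ne_of_gt (div_pos hθd hσ2)
    have hmul : ((θ₁-θ₀)/σ^2) * (zt' t) = ((θ₁-θ₀)/σ^2) * (Z t) := by linarith
    exact mul_left_cancel₀ hcoef hmul
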